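/- Let g be a Lie algebra over a field k and let r : g → n_n(k) be a flag homomorphism (λ_{i,i+1} ≠ 0 for every i = 1,…,n−1). If b ∈ GL_n(k) satisfies b·r(v) = r(v)·b for all v ∈ g, then b is upper triangular and all of its diagonal entries are equal; consequently b = a·u with a ∈ k^× a scalar and u an upper triangular matrix with all diagonal entries equal to 1 commuting with every r(v). -/

import Mathlib

attribute [local instance 100] LieRing.ofAssociativeRing

/-- Let `r : g → n_n(k)` be a flag homomorphism (the entries `λ_{i,i+1}` are
nonzero functionals).  If `b ∈ GL_n(k)` commutes with every `r v`, then `b` is upper triangular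
with all diagonal entries equal; consequently `b = a • u` with `a ∈ kˣ` a scalar and `u`
upper triangular unipotent (all diagonal entries `1`) commuting with every `r v`. -/
theorem stmt_5 {k : Type*} [Field k] {g : Type*} [LieRing g] [LieAlgebra k g] {n : ℕ}
    (r : g →ₗ⁅k⁆ Matrix (Fin n) (Fin n) k)
    (hr : ∀ (v : g) (i j : Fin n), j ≤ i → r v i j = 0)
    (hflag : ∀ (i : ℕ) (hi : i + 1 < n), ∃ v : g, r v ⟨i, by omega⟩ ⟨i + 1, hi⟩ ≠ 0)
    (b : Matrix (Fin n) (Fin n) k) (hb : IsUnit b)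
    (hcomm : ∀ v : g, b * r v = r v * b) :
    (∀ i j : Fin n, j < i → b i j = 0) ∧
    (∀ i j : Fin n, b i i = b j j) ∧
    ∃ (a : kˣ) (u : Matrix (Fin n) (Fin n) k),
      (∀ i j : Fin n, j < i → u i j = 0) ∧
      (∀ i : Fin n, u i i = 1) ∧
      (∀ v : g, u * r v = r v * u) ∧
      b = (a : k) • u := by
  -- Upper triangularity
  have key : ∀ m : ℕ, ∀ j : Fin n, j.val = m → ∀ i : Fin n, j < i → b i j = 0 := by
    intro m
    induction m using Nat.strong_induction_on with
    | _ m IH =>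
      intro j hj
      suffices H : ∀ d : ℕ, ∀ i : Fin n, n - i.val ≤ d → j < i → b i j = 0 by
        intro i hi; exact H n i (by omega) hi
      intro d
      induction d with
      | zero => intro i h hi; have := i.isLt; omega
      | succ d IHd =>
        intro i hd hij
        by_contra hbij
        have hij' : j.val < i.val := hij
        have h1 : 1 ≤ i.val := by omega
        have hi1 : i.val - 1 + 1 < n := by have := i.isLt; omega
        obtain ⟨v, hv⟩ := hflag (i.val - 1) hi1
        set i' : Fin n := ⟨i.val - 1, by omega⟩ with hi'
        have hcast : (⟨i.val - 1 + 1, hi1⟩ : Fin n) = i := by ext; simp; omega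
        rw [hcast] at hv
        have lhs : (b * r v) i' j = 0 := by
          rw [Matrix.mul_apply]
          apply Finset.sum_eq_zero
          intro l _
          by_cases hl : l.val < j.val
          · have hbl : b i' l = 0 := by
              refine IH l.val (by omega) l rfl i' ?_
              show l.val < i'.val
              simp [hi']; omega
            rw [hbl, zero_mul]
          · rw [hr v l j (by exact Fin.le_def.mpr (by omega)), mul_zero]
        have rhs : (r v * b) i' j = r v i' i * b i j := by
          rw [Matrix.mul_apply]
          apply Finset.sum_eq_single
          · intro l _ hl
            by_cases h2 : l.val ≤ i'.val
            · rw [hr v i' l (Fin.le_def.mpr h2), zero_mul]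
            · have hli : i.val < l.val := by
                have : l.val ≠ i.val := fun h => hl (Fin.ext h)
                simp [hi'] at h2; omega
              have : b l j = 0 := IHd l (by omega) (Fin.lt_def.mpr (by omega))
              rw [this, mul_zero]
          · intro h; exact absurd (Finset.mem_univ i) h
        have := congrFun (congrFun (hcomm v) i') j
        rw [lhs, rhs] at this
        exact mul_ne_zero hv hbij this.symm
  have htri : ∀ i j : Fin n, j < i → b i j = 0 := fun i j h => key j.val j rfl i h
  -- Diagonal step
  have hstep : ∀ m (hm : m + 1 < n),
      b ⟨m, by omega⟩ ⟨m, by omega⟩ = b ⟨m + 1, hm⟩ ⟨m + 1, hm⟩ := by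
    intro m hm
    obtain ⟨v, hv⟩ := hflag m hm
    set i : Fin n := ⟨m, by omega⟩ with hidef
    set i1 : Fin n := ⟨m + 1, hm⟩ with hi1def
    have lhs : (b * r v) i i1 = b i i * r v i i1 := by
      rw [Matrix.mul_apply]
      apply Finset.sum_eq_single
      · intro l _ hl
        by_cases h2 : l.val < m
        · rw [htri i l (Fin.lt_def.mpr (by simpa [hidef])), zero_mul]
        · have : i1.val ≤ l.val := by
            have : l.val ≠ m := fun h => hl (Fin.ext (by simpa [hidef] using h))
            simp [hi1def]; omega
          rw [hr v l i1 (Fin.le_def.mpr this), mul_zero]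
      · intro h; exact absurd (Finset.mem_univ i) h
    have rhs : (r v * b) i i1 = r v i i1 * b i1 i1 := by
      rw [Matrix.mul_apply]
      apply Finset.sum_eq_single
      · intro l _ hl
        by_cases h2 : l.val ≤ m
        · rw [hr v i l (Fin.le_def.mpr (by simpa [hidef])), zero_mul]
        · have : i1.val < l.val := by
            have : l.val ≠ m + 1 := fun h => hl (Fin.ext (by simpa [hi1def] using h))
            simp [hi1def]; omega
          rw [htri l i1 (Fin.lt_def.mpr this), mul_zero]
      · intro h; exact absurd (Finset.mem_univ i1) h
    have := congrFun (congrFun (hcomm v) i) i1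
    rw [lhs, rhs] at this
    rw [mul_comm (r v i i1) (b i1 i1)] at this
    exact mul_right_cancel₀ hv this
  -- all diagonal entries equal
  have hdiag : ∀ i j : Fin n, b i i = b j j := by
    have h0 : ∀ m (hm : m < n), b ⟨m, hm⟩ ⟨m, hm⟩ = b ⟨0, by omega⟩ ⟨0, by omega⟩ := by
      intro m
      induction m with
      | zero => intro hm; rfl
      | succ m ih => intro hm; rw [← hstep m hm]; exact ih (by omega)
    intro i j
    have h1 := h0 i.val i.isLt
    have h2 := h0 j.val j.isLt
    simp only [Fin.eta] at h1 h2
    rw [h1, h2]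
  refine ⟨htri, hdiag, ?_⟩
  rcases Nat.eq_zero_or_pos n with hn | hn
  · subst hn
    exact ⟨1, b, fun i => i.elim0, fun i => i.elim0, hcomm, (one_smul k b).symm⟩
  · set i0 : Fin n := ⟨0, hn⟩
    set a0 : k := b i0 i0 with ha0
    have hprod : b.det = a0 ^ n := by
      rw [Matrix.det_of_upperTriangular (fun i j h => htri i j h)]
      rw [Finset.prod_congr rfl (fun i _ => hdiag i i0)]
      simp [ha0]
    have ha : a0 ≠ 0 := by
      have : IsUnit b.det := (Matrix.isUnit_iff_isUnit_det b).mp hb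
      rw [hprod] at this
      exact ((isUnit_pow_iff (by omega)).mp this).ne_zero
    refine ⟨Units.mk0 a0 ha, a0⁻¹ • b, ?_, ?_, ?_, ?_⟩
    · intro i j hij; simp [htri i j hij]
    · intro i; simp [ha0, hdiag i i0, inv_mul_cancel₀ ha]; exact inv_mul_cancel₀ ha
    · intro v
      rw [Matrix.smul_mul, hcomm v, Matrix.mul_smul]
    · simp [smul_smul, mul_inv_cancel₀ ha]
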